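/- Let n ≥ 2 be an integer. In the stone game on the n-by-n board, there exists a nonzero number of legal moves starting from the empty board and ending with the empty board if and only if n is divisible by 3. -/

import Mathlib

/-- A single legal move in the stone game on the `n`-by-`n` board.  The state
is the finite set of cells (column, row) currently containing stones.  Either
place stones on an empty L-shaped tromino `(i, j), (i+1, j), (i, j+1)`
(rotations not allowed), or clear a full column or a full row. -/
def StoneMove (n : ℕ) (s t : Finset (Fin n × Fin n)) : Prop :=
  (∃ (i j : Fin n) (hi : (i : ℕ) + 1 < n) (hj : (j : ℕ) + 1 < n),
      (i, j) ∉ s ∧ (⟨(i : ℕ) + 1, hi⟩, j) ∉ s ∧ (i, ⟨(j : ℕ) + 1, hj⟩) ∉ s ∧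
      t = s ∪ {(i, j), (⟨(i : ℕ) + 1, hi⟩, j), (i, ⟨(j : ℕ) + 1, hj⟩)}) ∨
  (∃ i : Fin n, (∀ j : Fin n, (i, j) ∈ s) ∧
      t = s.filter (fun p => p.1 ≠ i)) ∨
  (∃ j : Fin n, (∀ i : Fin n, (i, j) ∈ s) ∧
      t = s.filter (fun p => p.2 ≠ j))

instance (n : ℕ) (s t : Finset (Fin n × Fin n)) : Decidable (StoneMove n s t) := by
  unfold StoneMove; infer_instance

theorem cycle3 : Relation.TransGen (StoneMove 3) ∅ ∅ := by
  have h1 : StoneMove 3 ∅ {(0,0),(1,0),(0,1)} := by decide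
  have h2 : StoneMove 3 {(0,0),(1,0),(0,1)} {(0,0),(1,0),(0,1),(1,1),(2,1),(1,2)} := by decide
  have h3 : StoneMove 3 {(0,0),(1,0),(0,1),(1,1),(2,1),(1,2)} {(0,0),(1,0),(1,2)} := by decide
  have h4 : StoneMove 3 {(0,0),(1,0),(1,2)} {(0,0),(1,0),(1,2),(0,1),(1,1),(0,2)} := by decide
  have h5 : StoneMove 3 {(0,0),(1,0),(1,2),(0,1),(1,1),(0,2)} {(1,0),(1,1),(1,2)} := by decide
  have h6 : StoneMove 3 {(1,0),(1,1),(1,2)} ∅ := by decide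
  exact .tail (.tail (.tail (.tail (.tail (.single h1) h2) h3) h4) h5) h6

open Finset Relation

section Lift
variable {n k : ℕ} (hn : n = 3 * k)

/-- batch of tromino moves -/
lemma batch_trominoes (base : Finset (Fin n × Fin n)) {ι : Type} [DecidableEq ι]
    (A : Finset ι) (P : ι → Finset (Fin n × Fin n))
    (htri : ∀ q ∈ A, ∃ (i j : Fin n) (hi : (i : ℕ) + 1 < n) (hj : (j : ℕ) + 1 < n),
      P q = {(i, j), (⟨(i : ℕ) + 1, hi⟩, j), (i, ⟨(j : ℕ) + 1, hj⟩)})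
    (hdisj : ∀ q ∈ A, Disjoint (P q) base)
    (hpair : ∀ q ∈ A, ∀ q' ∈ A, q ≠ q' → Disjoint (P q) (P q')) :
    ReflTransGen (StoneMove n) base (base ∪ A.biUnion P) := by
  classical
  induction A using Finset.induction with
  | empty => simpa using ReflTransGen.refl
  | @insert q A hq ih =>
    have step : StoneMove n (base ∪ A.biUnion P) ((base ∪ A.biUnion P) ∪ P q) := by
      obtain ⟨i, j, hi, hj, hPq⟩ := htri q (mem_insert_self q A)
      left
      have notmem : ∀ a ∈ P q, a ∉ base ∪ A.biUnion P := by
        intro a ha hmem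
        rcases mem_union.1 hmem with h | h
        · exact Finset.disjoint_left.1 (hdisj q (mem_insert_self q A)) ha h
        · obtain ⟨q', hq', hmem'⟩ := mem_biUnion.1 h
          exact Finset.disjoint_left.1 (hpair q (mem_insert_self q A) q'
            (mem_insert_of_mem hq') (by rintro rfl; exact hq hq')) ha hmem'
      refine ⟨i, j, hi, hj, ?_, ?_, ?_, ?_⟩
      · exact notmem _ (by rw [hPq]; simp) 
      · exact notmem _ (by rw [hPq]; simp)
      · exact notmem _ (by rw [hPq]; simp)
      · rw [← hPq]
    have ih' := ih (fun q hq => htri q (mem_insert_of_mem hq))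
      (fun q hq => hdisj q (mem_insert_of_mem hq))
      (fun q hq q' hq' => hpair q (mem_insert_of_mem hq) q' (mem_insert_of_mem hq'))
    have : (base ∪ A.biUnion P) ∪ P q = base ∪ (insert q A).biUnion P := by
      rw [biUnion_insert, union_assoc, union_comm (A.biUnion P)]
    exact ih'.tail (this ▸ step)

/-- batch clearing of columns -/
lemma batch_clear_cols (S : Finset (Fin n × Fin n)) (A : Finset (Fin n))
    (h : ∀ i ∈ A, ∀ j, (i, j) ∈ S) :
    ReflTransGen (StoneMove n) S (S.filter (fun p => p.1 ∉ A)) := by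
  classical
  induction A using Finset.induction generalizing S with
  | empty => simpa using ReflTransGen.refl
  | @insert i A hq ih =>
    have step : StoneMove n S (S.filter (fun p => p.1 ≠ i)) := by
      right; left
      exact ⟨i, fun j => h i (mem_insert_self i A) j, by simp⟩
    have ih' := ih (S.filter (fun p => p.1 ≠ i)) (fun i' hi' j => by
      simp only [mem_filter]
      exact ⟨h i' (mem_insert_of_mem hi') j, fun he => hq (he ▸ hi')⟩)
    have heq : (S.filter (fun p => p.1 ≠ i)).filter (fun p => p.1 ∉ A)
        = S.filter (fun p => p.1 ∉ insert i A) := by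
      ext p; simp; tauto
    exact (ReflTransGen.single step).trans (heq ▸ ih')

/-- batch clearing of rows -/
lemma batch_clear_rows (S : Finset (Fin n × Fin n)) (A : Finset (Fin n))
    (h : ∀ j ∈ A, ∀ i, (i, j) ∈ S) :
    ReflTransGen (StoneMove n) S (S.filter (fun p => p.2 ∉ A)) := by
  classical
  induction A using Finset.induction generalizing S with
  | empty => simpa using ReflTransGen.refl
  | @insert j A hq ih =>
    have step : StoneMove n S (S.filter (fun p => p.2 ≠ j)) := by
      right; right
      exact ⟨j, fun i => h j (mem_insert_self j A) i, by simp⟩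
    have ih' := ih (S.filter (fun p => p.2 ≠ j)) (fun j' hj' i => by
      simp only [mem_filter]
      exact ⟨h j' (mem_insert_of_mem hj') i, fun he => hq (he ▸ hj')⟩)
    have heq : (S.filter (fun p => p.2 ≠ j)).filter (fun p => p.2 ∉ A)
        = S.filter (fun p => p.2 ∉ insert j A) := by
      ext p; simp; tauto
    exact (ReflTransGen.single step).trans (heq ▸ ih')

end Lift

section Sim
variable {k : ℕ} (hk : 0 < k)

def r3 {n : ℕ} (hn : n = 3 * k) (i : Fin n) : Fin 3 := ⟨(i : ℕ) % 3, by omega⟩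

def L {n : ℕ} (hn : n = 3 * k) (s : Finset (Fin 3 × Fin 3)) : Finset (Fin n × Fin n) :=
  univ.filter (fun p => (r3 hn p.1, r3 hn p.2) ∈ s)

lemma mem_L {n : ℕ} (hn : n = 3 * k) (s : Finset (Fin 3 × Fin 3)) (p : Fin n × Fin n) :
    p ∈ L hn s ↔ (r3 hn p.1, r3 hn p.2) ∈ s := by simp [L]

lemma L_empty {n : ℕ} (hn : n = 3 * k) : L hn (∅ : Finset (Fin 3 × Fin 3)) = ∅ := by
  simp [L]

include hk in
lemma mem_L_emb {n : ℕ} (hn : n = 3 * k) (s : Finset (Fin 3 × Fin 3)) (c : Fin 3 × Fin 3) :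
    ((⟨(c.1 : ℕ), by omega⟩ : Fin n), (⟨(c.2 : ℕ), by omega⟩ : Fin n)) ∈ L hn s ↔ c ∈ s := by
  rw [mem_L]
  have : (r3 hn (⟨(c.1 : ℕ), by omega⟩ : Fin n), r3 hn (⟨(c.2 : ℕ), by omega⟩ : Fin n)) = c := by
    simp only [r3, Fin.ext_iff, Prod.ext_iff, Fin.val_mk]
    omega
  rw [this]

include hk in
lemma sim {n : ℕ} (hn : n = 3 * k) (s t : Finset (Fin 3 × Fin 3)) (hmv : StoneMove 3 s t) :
    Relation.TransGen (StoneMove n) (L hn s) (L hn t) := by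
  classical
  have hLne : L hn s ≠ L hn t := by
    have e := mem_L_emb hk hn s
    have e' := mem_L_emb hk hn t
    have hst : s ≠ t := by
      rcases hmv with ⟨i, j, hi, hj, h1, h2, h3, ht⟩ | ⟨i, h1, ht⟩ | ⟨j, h1, ht⟩
      · intro hEq; apply h1; rw [hEq, ht]; simp
      · intro hEq; have := h1 i; rw [hEq, ht] at this; simp at this
      · intro hEq; have := h1 j; rw [hEq, ht] at this; simp at this
    intro hL
    apply hst
    ext c
    rw [← e c, ← e' c, hL]
  suffices hR : ReflTransGen (StoneMove n) (L hn s) (L hn t) by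
    rcases Relation.reflTransGen_iff_eq_or_transGen.1 hR with h | h
    · exact absurd h.symm hLne
    · exact h
  rcases hmv with ⟨a, b, ha, hb, h1, h2, h3, ht⟩ | ⟨i0, h1, ht⟩ | ⟨j0, h1, ht⟩
  · -- tromino lift
    set P : Fin k × Fin k → Finset (Fin n × Fin n) := fun q =>
      {(⟨3 * (q.1 : ℕ) + (a : ℕ), by omega⟩, ⟨3 * (q.2 : ℕ) + (b : ℕ), by omega⟩),
       (⟨3 * (q.1 : ℕ) + (a : ℕ) + 1, by omega⟩, ⟨3 * (q.2 : ℕ) + (b : ℕ), by omega⟩),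
       (⟨3 * (q.1 : ℕ) + (a : ℕ), by omega⟩, ⟨3 * (q.2 : ℕ) + (b : ℕ) + 1, by omega⟩)} with hP
    have key := batch_trominoes (L hn s) (univ : Finset (Fin k × Fin k)) P
      (fun q _ => ⟨⟨3 * (q.1 : ℕ) + (a : ℕ), by omega⟩, ⟨3 * (q.2 : ℕ) + (b : ℕ), by omega⟩,
        by simp; omega, by simp; omega, rfl⟩)
      (fun q _ => by
        rw [Finset.disjoint_left]
        intro p hp hmem
        rw [mem_L] at hmem
        have hres : (r3 hn p.1, r3 hn p.2) = (a, b) ∨ (r3 hn p.1, r3 hn p.2) = (⟨(a:ℕ)+1, ha⟩, b)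
            ∨ (r3 hn p.1, r3 hn p.2) = (a, ⟨(b:ℕ)+1, hb⟩) := by
          simp only [hP, mem_insert, mem_singleton] at hp
          rcases hp with h | h | h
          · left; rw [h]; simp only [r3, Prod.ext_iff, Fin.ext_iff, Fin.val_mk]; omega
          · right; left; rw [h]; simp only [r3, Prod.ext_iff, Fin.ext_iff, Fin.val_mk]; omega
          · right; right; rw [h]; simp only [r3, Prod.ext_iff, Fin.ext_iff, Fin.val_mk]; omega
        rcases hres with h | h | h <;> rw [h] at hmem
        · exact h1 hmem
        · exact h2 hmem
        · exact h3 hmem)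
      (fun q _ q' _ hne => by
        rw [Finset.disjoint_left]
        intro p hp hp'
        apply hne
        simp only [hP, mem_insert, mem_singleton] at hp hp'
        have hq : q = q' := by
          rw [Prod.ext_iff, Fin.ext_iff, Fin.ext_iff]
          rcases hp with h | h | h <;> rcases hp' with h' | h' | h' <;>
            · rw [h, Prod.ext_iff, Fin.ext_iff, Fin.ext_iff] at h'; simp at h' ⊢; omega
        exact hq)
    have hfin : L hn s ∪ (univ : Finset (Fin k × Fin k)).biUnion P = L hn t := by
      ext p
      rw [mem_union, mem_L, mem_L, ht]
      simp only [mem_union, mem_insert, mem_singleton, mem_biUnion, Finset.mem_univ, true_and]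
      constructor
      · rintro (h | ⟨q, hq⟩)
        · exact Or.inl h
        · right
          simp only [hP, mem_insert, mem_singleton] at hq
          rcases hq with h | h | h
          · left; rw [h]; simp only [r3, Prod.ext_iff, Fin.ext_iff, Fin.val_mk]; omega
          · right; left; rw [h]; simp only [r3, Prod.ext_iff, Fin.ext_iff, Fin.val_mk]; omega
          · right; right; rw [h]; simp only [r3, Prod.ext_iff, Fin.ext_iff, Fin.val_mk]; omega
      · rintro (h | h | h | h)
        · exact Or.inl h
        · right
          refine ⟨(⟨(p.1 : ℕ) / 3, by omega⟩, ⟨(p.2 : ℕ) / 3, by omega⟩), ?_⟩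
          simp only [r3, Prod.ext_iff, Fin.ext_iff] at h
          simp only [hP, mem_insert, mem_singleton]
          left; simp [Prod.ext_iff, Fin.ext_iff]; omega
        · right
          refine ⟨(⟨(p.1 : ℕ) / 3, by omega⟩, ⟨(p.2 : ℕ) / 3, by omega⟩), ?_⟩
          simp only [r3, Prod.ext_iff, Fin.ext_iff] at h
          simp only [hP, mem_insert, mem_singleton]
          right; left; simp [Prod.ext_iff, Fin.ext_iff]; omega
        · right
          refine ⟨(⟨(p.1 : ℕ) / 3, by omega⟩, ⟨(p.2 : ℕ) / 3, by omega⟩), ?_⟩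
          simp only [r3, Prod.ext_iff, Fin.ext_iff] at h
          simp only [hP, mem_insert, mem_singleton]
          right; right; simp [Prod.ext_iff, Fin.ext_iff]; omega
    rw [hfin] at key
    exact key
  · -- column clear lift
    have key := batch_clear_cols (L hn s) (univ.filter (fun i : Fin n => (i : ℕ) % 3 = (i0 : ℕ)))
      (fun i hi j => by
        rw [mem_filter] at hi
        rw [mem_L]
        have : r3 hn i = i0 := by simp [r3, Fin.ext_iff]; exact hi.2
        rw [this]; exact h1 _)
    have hfin : (L hn s).filter (fun p => p.1 ∉ univ.filter (fun i : Fin n => (i : ℕ) % 3 = (i0 : ℕ)))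
        = L hn t := by
      ext p
      rw [mem_filter, mem_L, mem_L, ht, mem_filter]
      simp [r3, Fin.ext_iff]
    rw [hfin] at key
    exact key
  · -- row clear lift
    have key := batch_clear_rows (L hn s) (univ.filter (fun j : Fin n => (j : ℕ) % 3 = (j0 : ℕ)))
      (fun j hj i => by
        rw [mem_filter] at hj
        rw [mem_L]
        have : r3 hn j = j0 := by simp [r3, Fin.ext_iff]; exact hj.2
        rw [this]; exact h1 _)
    have hfin : (L hn s).filter (fun p => p.2 ∉ univ.filter (fun j : Fin n => (j : ℕ) % 3 = (j0 : ℕ)))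
        = L hn t := by
      ext p
      rw [mem_filter, mem_L, mem_L, ht, mem_filter]
      simp [r3, Fin.ext_iff]
    rw [hfin] at key
    exact key

end Sim

noncomputable def Phi (n : ℕ) (x : ℂ) : ℂ := ∑ i ∈ Finset.range n, x ^ i

lemma Phi_eq_zero {n : ℕ} {u : ℂ} (hu : u ^ n = 1) (hu1 : u ≠ 1) : Phi n u = 0 := by
  have h := geom_sum_mul u n
  rw [hu, sub_self] at h
  rcases mul_eq_zero.1 h with h | h
  · exact h
  · exact absurd (by linear_combination h) hu1

lemma pow_of_Phi_eq_zero {n : ℕ} {u : ℂ} (h : Phi n u = 0) : u ^ n = 1 := by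
  have h2 := geom_sum_mul u n
  rw [show (∑ i ∈ Finset.range n, u ^ i) = Phi n u from rfl, h, zero_mul] at h2
  linear_combination -h2

lemma key_geom {n : ℕ} (hn : 2 ≤ n) (h3 : ¬ 3 ∣ n) {u : ℂ} (hu : u ^ n = 1)
    (hu1 : u ≠ 1) (hv : (-1 - u) ^ n = 1) : False := by
  have hn0 : n ≠ 0 := by omega
  have habs : ‖u‖ = 1 := by
    have h1 : ‖u‖ ^ n = 1 := by rw [← norm_pow, hu, norm_one]
    rcases lt_trichotomy ‖u‖ 1 with h | h | h
    · exact absurd h1 (ne_of_lt (pow_lt_one₀ (norm_nonneg _) h hn0))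
    · exact h
    · exact absurd h1 (ne_of_gt (one_lt_pow₀ h hn0))
  have habs2 : ‖1 + u‖ = 1 := by
    have he : (-1 - u) = -(1 + u) := by ring
    have h1 : ‖1 + u‖ ^ n = 1 := by
      rw [← norm_pow]
      rw [show (1 + u) ^ n = (-(1:ℂ))^n * (-1 - u)^n by rw [← mul_pow]; ring_nf, hv, mul_one,
        norm_pow]
      simp
    rcases lt_trichotomy ‖1 + u‖ 1 with h | h | h
    · exact absurd h1 (ne_of_lt (pow_lt_one₀ (norm_nonneg _) h hn0))
    · exact h
    · exact absurd h1 (ne_of_gt (one_lt_pow₀ h hn0))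
  have hns : u.re ^ 2 + u.im ^ 2 = 1 := by
    have := Complex.normSq_eq_norm_sq u
    rw [habs] at this
    simp [Complex.normSq_apply] at this
    nlinarith [this]
  have hns2 : (1 + u.re) ^ 2 + u.im ^ 2 = 1 := by
    have := Complex.normSq_eq_norm_sq (1 + u)
    rw [habs2] at this
    simp [Complex.normSq_apply] at this
    nlinarith [this]
  have hre : u.re = -(1/2) := by nlinarith
  have him : u.im ^ 2 = 3 / 4 := by nlinarith
  have hcube : u ^ 2 + u + 1 = 0 := by
    apply Complex.ext
    · simp [pow_two, Complex.mul_re, Complex.add_re]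
      nlinarith
    · simp [pow_two, Complex.mul_im, Complex.add_im]
      nlinarith
  have hu3 : u ^ 3 = 1 := by linear_combination (u - 1) * hcube
  have hmod : u ^ (n % 3) = 1 := by
    conv at hu => rw [show n = 3 * (n / 3) + n % 3 by omega]
    rw [pow_add, pow_mul, hu3, one_pow, one_mul] at hu
    exact hu
  have : n % 3 = 1 ∨ n % 3 = 2 := by omega
  rcases this with h | h
  · rw [h, pow_one] at hmod; exact hu1 hmod
  · rw [h] at hmod
    apply hu1
    linear_combination hu3 - u * hmod

lemma all_eq_of_vanish {n : ℕ} (hn : 2 ≤ n) {ζ : ℂ} (hζ : IsPrimitiveRoot ζ n)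
    (R : Fin n → ℕ)
    (hv : ∀ k : ℕ, 0 < k → k < n → ∑ j : Fin n, (R j : ℂ) * (ζ ^ k) ^ (j : ℕ) = 0)
    (j₀ : Fin n) : (n : ℂ) * (R j₀ : ℂ) = ∑ j : Fin n, (R j : ℂ) := by
  have hn0 : n ≠ 0 := by omega
  have hS : ∑ k ∈ Finset.range n, ((∑ j : Fin n, (R j : ℂ) * (ζ ^ k) ^ (j : ℕ))
      * (ζ ^ k) ^ (n - (j₀ : ℕ))) = ∑ j : Fin n, (R j : ℂ) := by
    rw [Finset.sum_eq_single_of_mem 0 (Finset.mem_range.2 (by omega))]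
    · simp
    · intro k hk hk0
      rw [hv k (by omega) (Finset.mem_range.1 hk), zero_mul]
  have hS2 : ∑ k ∈ Finset.range n, ((∑ j : Fin n, (R j : ℂ) * (ζ ^ k) ^ (j : ℕ))
      * (ζ ^ k) ^ (n - (j₀ : ℕ))) = (n : ℂ) * (R j₀ : ℂ) := by
    have swap : ∀ k, (∑ j : Fin n, (R j : ℂ) * (ζ ^ k) ^ (j : ℕ)) * (ζ ^ k) ^ (n - (j₀ : ℕ))
        = ∑ j : Fin n, (R j : ℂ) * (ζ ^ ((j : ℕ) + (n - (j₀ : ℕ)))) ^ k := by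
      intro k
      rw [Finset.sum_mul]
      congr 1; ext j
      rw [mul_assoc, ← pow_add, ← pow_mul, mul_comm k _, pow_mul]
    simp_rw [swap]
    rw [Finset.sum_comm]
    have inner : ∀ j : Fin n, ∑ k ∈ Finset.range n, (R j : ℂ) * (ζ ^ ((j : ℕ) + (n - (j₀ : ℕ)))) ^ k
        = if j = j₀ then (n : ℂ) * (R j : ℂ) else 0 := by
      intro j
      rw [← Finset.mul_sum]
      by_cases hj : j = j₀
      · subst hj
        rw [if_pos rfl]
        have : (j : ℕ) + (n - (j : ℕ)) = n := by omega
        rw [this, hζ.pow_eq_one]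
        simp [mul_comm]
      · rw [if_neg hj]
        have hne : ζ ^ ((j : ℕ) + (n - (j₀ : ℕ))) ≠ 1 := by
          intro h1
          have hdvd := (hζ.pow_eq_one_iff_dvd _).1 h1
          have hjlt := j.isLt
          have hj0lt := j₀.isLt
          have h3 : (j : ℕ) + (n - (j₀ : ℕ)) ≠ n := by
            intro he; apply hj; apply Fin.ext; omega
          obtain ⟨c, hc⟩ := hdvd
          have hc2 : c = 0 ∨ c = 1 ∨ 2 ≤ c := by omega
          rcases hc2 with rfl | rfl | hge
          · rw [Nat.mul_zero] at hc
            have : (j : ℕ) = j₀ := by omega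
            exact hj (Fin.ext (by omega))
          · rw [Nat.mul_one] at hc
            exact h3 hc
          · have hle : 2 * n ≤ n * c := by
              calc 2 * n = n * 2 := by ring
              _ ≤ n * c := Nat.mul_le_mul_left n hge
            rw [← hc] at hle
            omega
        have hpow : (ζ ^ ((j : ℕ) + (n - (j₀ : ℕ)))) ^ n = 1 := by
          rw [← pow_mul, mul_comm, pow_mul, hζ.pow_eq_one, one_pow]
        have := Phi_eq_zero hpow hne
        rw [Phi] at this
        rw [this, mul_zero]
    rw [Finset.sum_congr rfl (fun j _ => inner j)]
    rw [Finset.sum_ite_eq' Finset.univ j₀ (fun j => (n : ℂ) * (R j : ℂ))]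
    simp
  rw [← hS2, hS]

lemma algebra_step {n : ℕ} (hn : 2 ≤ n) (h3 : ¬ 3 ∣ n) (R C : Fin n → ℕ)
    (H : ∀ x : ℂ, (∑ j : Fin n, (R j : ℂ) * (-1 - x) ^ (j : ℕ)) * Phi n x
      + (∑ i : Fin n, (C i : ℂ) * x ^ (i : ℕ)) * Phi n (-1 - x) = 0) :
    (∀ j, R j = 0) ∧ (∀ i, C i = 0) := by
  have hn0 : n ≠ 0 := by omega
  obtain ⟨ζ, hζ⟩ : ∃ ζ : ℂ, IsPrimitiveRoot ζ n :=
    ⟨_, Complex.isPrimitiveRoot_exp n hn0⟩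
  -- the nontrivial n-th roots kill both polynomials
  have hPhiNe : ∀ k : ℕ, 0 < k → k < n → Phi n (-1 - ζ ^ k) ≠ 0 := by
    intro k hk1 hk2 hzero
    have hpow := pow_of_Phi_eq_zero hzero
    exact key_geom hn h3 (by rw [← pow_mul, mul_comm, pow_mul, hζ.pow_eq_one, one_pow])
      (hζ.pow_ne_one_of_pos_of_lt hk1.ne' hk2) hpow
  have hPhiZero : ∀ k : ℕ, 0 < k → k < n → Phi n (ζ ^ k) = 0 := by
    intro k hk1 hk2
    exact Phi_eq_zero (by rw [← pow_mul, mul_comm, pow_mul, hζ.pow_eq_one, one_pow])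
      (hζ.pow_ne_one_of_pos_of_lt hk1.ne' hk2)
  have hvR : ∀ k : ℕ, 0 < k → k < n → ∑ j : Fin n, (R j : ℂ) * (ζ ^ k) ^ (j : ℕ) = 0 := by
    intro k hk1 hk2
    have := H (-1 - ζ ^ k)
    have he : -1 - (-1 - ζ ^ k) = ζ ^ k := by ring
    rw [he, hPhiZero k hk1 hk2, mul_zero, add_zero] at this
    exact (mul_eq_zero.1 this).resolve_right (hPhiNe k hk1 hk2)
  have hvC : ∀ k : ℕ, 0 < k → k < n → ∑ i : Fin n, (C i : ℂ) * (ζ ^ k) ^ (i : ℕ) = 0 := by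
    intro k hk1 hk2
    have := H (ζ ^ k)
    rw [hPhiZero k hk1 hk2] at this
    rw [mul_zero, zero_add] at this
    exact (mul_eq_zero.1 this).resolve_right (hPhiNe k hk1 hk2)
  -- all R equal, all C equal
  have hReq : ∀ j j' : Fin n, R j = R j' := by
    intro j j'
    have h1 := all_eq_of_vanish hn hζ R hvR j
    have h2 := all_eq_of_vanish hn hζ R hvR j'
    have : (n : ℂ) * (R j : ℂ) = (n : ℂ) * (R j' : ℂ) := by rw [h1, h2]
    have hcast : ((R j : ℂ)) = (R j' : ℂ) :=
      mul_left_cancel₀ (Nat.cast_ne_zero.2 hn0) this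
    exact_mod_cast hcast
  have hCeq : ∀ i i' : Fin n, C i = C i' := by
    intro i i'
    have h1 := all_eq_of_vanish hn hζ C hvC i
    have h2 := all_eq_of_vanish hn hζ C hvC i'
    have : (n : ℂ) * (C i : ℂ) = (n : ℂ) * (C i' : ℂ) := by rw [h1, h2]
    have hcast : ((C i : ℂ)) = (C i' : ℂ) :=
      mul_left_cancel₀ (Nat.cast_ne_zero.2 hn0) this
    exact_mod_cast hcast
  -- evaluate at x = 1
  have hzero : Fin n := ⟨0, by omega⟩
  set q := R hzero with hq
  set q' := C hzero with hq'
  have H1 := H 1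
  have hPhi1 : Phi n (1 : ℂ) = n := by simp [Phi]
  have hRsum : ∑ j : Fin n, (R j : ℂ) * (-1 - (1:ℂ)) ^ (j : ℕ) = (q : ℂ) * Phi n (-1 - 1) := by
    rw [Phi, ← Fin.sum_univ_eq_sum_range (fun j => ((-1 : ℂ) - 1) ^ j) n, Finset.mul_sum]
    congr 1; ext j
    rw [hReq j hzero]
  have hCsum : ∑ i : Fin n, (C i : ℂ) * (1:ℂ) ^ (i : ℕ) = (n : ℂ) * (q' : ℂ) := by
    have : ∀ i : Fin n, (C i : ℂ) * (1:ℂ) ^ (i : ℕ) = (q' : ℂ) := by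
      intro i; rw [hCeq i hzero, one_pow, mul_one]
    rw [Finset.sum_congr rfl (fun i _ => this i)]
    simp [mul_comm]
  rw [hRsum, hCsum, hPhi1] at H1
  have hPhine2 : Phi n (-1 - 1 : ℂ) ≠ 0 := by
    intro h
    have := pow_of_Phi_eq_zero h
    have habs := congrArg (fun z : ℂ => ‖z‖) this
    simp only [norm_pow, norm_one] at habs
    have : ‖(-1 - 1 : ℂ)‖ = 2 := by
      rw [show (-1 - 1 : ℂ) = -(2:ℂ) by norm_num, norm_neg]; simp
    rw [this] at habs
    have : (2:ℝ) ^ n = 1 := habs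
    have h2 : (1:ℝ) < 2 ^ n := one_lt_pow₀ (by norm_num) hn0
    linarith
  have hsum0 : ((q : ℂ) + (q' : ℂ)) * ((n : ℂ) * Phi n (-1 - 1)) = 0 := by
    linear_combination H1
  have : ((n : ℂ) * Phi n (-1 - 1)) ≠ 0 :=
    mul_ne_zero (Nat.cast_ne_zero.2 hn0) hPhine2
  have hqq : (q : ℂ) + (q' : ℂ) = 0 := by
    rcases mul_eq_zero.1 hsum0 with h | h
    · exact h
    · exact absurd h this
  have : q + q' = 0 := by exact_mod_cast hqq
  have hq0 : q = 0 := by omega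
  have hq'0 : q' = 0 := by omega
  exact ⟨fun j => by rw [hReq j hzero, ← hq, hq0],
         fun i => by rw [hCeq i hzero, ← hq', hq'0]⟩

noncomputable def phi (n : ℕ) (x : ℂ) (s : Finset (Fin n × Fin n)) : ℂ :=
  ∑ p ∈ s, x ^ (p.1 : ℕ) * (-1 - x) ^ (p.2 : ℕ)


lemma move_delta {n : ℕ} {s s' : Finset (Fin n × Fin n)} (hmv : StoneMove n s s') :
    ∃ (m : ℕ) (R C : Fin n → ℕ),
      ((s'.card : ℤ) = (s.card : ℤ) + 3 * m - n * ((∑ j, (R j : ℤ)) + ∑ i, (C i : ℤ))) ∧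
      ∀ x : ℂ, phi n x s' = phi n x s
        - (∑ j : Fin n, (R j : ℂ) * (-1 - x) ^ (j : ℕ)) * Phi n x
        - (∑ i : Fin n, (C i : ℂ) * x ^ (i : ℕ)) * Phi n (-1 - x) := by
  classical
  rcases hmv with ⟨i, j, hi, hj, h1, h2, h3, ht⟩ | ⟨i0, hcol, ht⟩ | ⟨j0, hrow, ht⟩
  · -- tromino
    refine ⟨1, 0, 0, ?_, ?_⟩
    · have hd : Disjoint s {(i, j), (⟨(i : ℕ) + 1, hi⟩, j), (i, ⟨(j : ℕ) + 1, hj⟩)} := by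
        rw [Finset.disjoint_right]
        intro a ha
        simp only [mem_insert, mem_singleton] at ha
        rcases ha with rfl | rfl | rfl <;> assumption
      have hcard3 : ({(i, j), (⟨(i : ℕ) + 1, hi⟩, j), (i, ⟨(j : ℕ) + 1, hj⟩)} :
          Finset (Fin n × Fin n)).card = 3 := by
        rw [Finset.card_insert_of_notMem, Finset.card_insert_of_notMem, Finset.card_singleton]
        · simp [Prod.ext_iff, Fin.ext_iff] <;> omega
        · simp [Prod.ext_iff, Fin.ext_iff] <;> omega
      rw [ht, Finset.card_union_of_disjoint hd, hcard3]
      push_cast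
      simp only [Pi.zero_apply, Nat.cast_zero, Finset.sum_const_zero]
      ring
    · intro x
      have hd : Disjoint s {(i, j), (⟨(i : ℕ) + 1, hi⟩, j), (i, ⟨(j : ℕ) + 1, hj⟩)} := by
        rw [Finset.disjoint_right]
        intro a ha
        simp only [mem_insert, mem_singleton] at ha
        rcases ha with rfl | rfl | rfl <;> assumption
      rw [ht]
      simp only [phi, Finset.sum_union hd]
      have htri : ∑ p ∈ ({(i, j), (⟨(i : ℕ) + 1, hi⟩, j), (i, ⟨(j : ℕ) + 1, hj⟩)} :
          Finset (Fin n × Fin n)), x ^ (p.1 : ℕ) * (-1 - x) ^ (p.2 : ℕ) = 0 := by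
        rw [Finset.sum_insert (by simp [Prod.ext_iff, Fin.ext_iff] <;> omega),
          Finset.sum_insert (by simp [Prod.ext_iff, Fin.ext_iff] <;> omega),
          Finset.sum_singleton]
        simp only [Fin.val_mk]
        rw [pow_succ, pow_succ]
        ring
      rw [htri]
      simp
  · -- column clear
    refine ⟨0, 0, (fun i => if i = i0 then 1 else 0), ?_, ?_⟩
    · have himg : s.filter (fun p => p.1 = i0) = (univ : Finset (Fin n)).image (fun j => (i0, j)) := by
        ext p
        simp only [mem_filter, Finset.mem_image, Finset.mem_univ, true_and]
        constructor
        · rintro ⟨hp, hp1⟩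
          exact ⟨p.2, by rw [← hp1]⟩
        · rintro ⟨j, rfl⟩
          exact ⟨hcol j, rfl⟩
      have hcardeq : (s.filter (fun p => p.1 = i0)).card = n := by
        rw [himg, Finset.card_image_of_injective _ (fun a b hab => by
          simpa [Prod.ext_iff] using hab)]
        simp
      have hsplit := Finset.card_filter_add_card_filter_not
        (s := s) (p := fun p : Fin n × Fin n => p.1 = i0)
      rw [ht]
      have : s.filter (fun p => p.1 ≠ i0) = s.filter (fun p => ¬ p.1 = i0) := by
        simp [ne_eq]
      rw [this]
      have hsum : (∑ i : Fin n, ((if i = i0 then 1 else 0 : ℕ) : ℤ)) = 1 := by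
        rw [Finset.sum_congr rfl (fun i _ => by push_cast; rfl)]
        rw [Finset.sum_ite_eq' Finset.univ i0 (fun _ => (1:ℤ))]
        simp
      rw [hsum]
      simp only [Pi.zero_apply, Nat.cast_zero, Finset.sum_const_zero]
      omega
    · intro x
      have himg : s.filter (fun p => p.1 = i0) = (univ : Finset (Fin n)).image (fun j => (i0, j)) := by
        ext p
        simp only [mem_filter, Finset.mem_image, Finset.mem_univ, true_and]
        constructor
        · rintro ⟨hp, hp1⟩
          exact ⟨p.2, by rw [← hp1]⟩
        · rintro ⟨j, rfl⟩
          exact ⟨hcol j, rfl⟩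
      have hsplit := Finset.sum_filter_add_sum_filter_not s (fun p : Fin n × Fin n => p.1 = i0)
        (fun p => x ^ (p.1 : ℕ) * (-1 - x) ^ (p.2 : ℕ))
      have hsumeq : ∑ p ∈ s.filter (fun p => p.1 = i0), x ^ (p.1 : ℕ) * (-1 - x) ^ (p.2 : ℕ)
          = x ^ (i0 : ℕ) * Phi n (-1 - x) := by
        rw [himg, Finset.sum_image (by intro a _ b _ hab; simpa [Prod.ext_iff] using hab)]
        simp only
        rw [← Finset.mul_sum, Phi, ← Fin.sum_univ_eq_sum_range (fun j => (-1 - x) ^ j) n]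
      have hCsum : (∑ i : Fin n, ((if i = i0 then 1 else 0 : ℕ) : ℂ) * x ^ (i : ℕ))
          = x ^ (i0 : ℕ) := by
        have : ∀ i : Fin n, ((if i = i0 then 1 else 0 : ℕ) : ℂ) * x ^ (i : ℕ)
            = if i = i0 then x ^ (i : ℕ) else 0 := by
          intro i; by_cases h : i = i0 <;> simp [h]
        rw [Finset.sum_congr rfl (fun i _ => this i)]
        rw [Finset.sum_ite_eq' Finset.univ i0 (fun i => x ^ (i : ℕ))]
        simp
      rw [ht]

      simp only [phi]
      rw [hCsum]
      simp only [Pi.zero_apply, Nat.cast_zero, zero_mul, Finset.sum_const_zero]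
      simp only [ne_eq]
      rw [← hsplit, hsumeq]
      ring
  · -- row clear
    refine ⟨0, (fun j => if j = j0 then 1 else 0), 0, ?_, ?_⟩
    · have himg : s.filter (fun p => p.2 = j0) = (univ : Finset (Fin n)).image (fun i => (i, j0)) := by
        ext p
        simp only [mem_filter, Finset.mem_image, Finset.mem_univ, true_and]
        constructor
        · rintro ⟨hp, hp1⟩
          exact ⟨p.1, by rw [← hp1]⟩
        · rintro ⟨i, rfl⟩
          exact ⟨hrow i, rfl⟩
      have hcardeq : (s.filter (fun p => p.2 = j0)).card = n := by
        rw [himg, Finset.card_image_of_injective _ (fun a b hab => by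
          simpa [Prod.ext_iff] using hab)]
        simp
      have hsplit := Finset.card_filter_add_card_filter_not
        (s := s) (p := fun p : Fin n × Fin n => p.2 = j0)
      rw [ht]
      have : s.filter (fun p => p.2 ≠ j0) = s.filter (fun p => ¬ p.2 = j0) := by
        simp [ne_eq]
      rw [this]
      have hsum : (∑ j : Fin n, ((if j = j0 then 1 else 0 : ℕ) : ℤ)) = 1 := by
        rw [Finset.sum_congr rfl (fun j _ => by push_cast; rfl)]
        rw [Finset.sum_ite_eq' Finset.univ j0 (fun _ => (1:ℤ))]
        simp
      rw [hsum]
      simp only [Pi.zero_apply, Nat.cast_zero, Finset.sum_const_zero]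
      omega
    · intro x
      have himg : s.filter (fun p => p.2 = j0) = (univ : Finset (Fin n)).image (fun i => (i, j0)) := by
        ext p
        simp only [mem_filter, Finset.mem_image, Finset.mem_univ, true_and]
        constructor
        · rintro ⟨hp, hp1⟩
          exact ⟨p.1, by rw [← hp1]⟩
        · rintro ⟨i, rfl⟩
          exact ⟨hrow i, rfl⟩
      have hsplit := Finset.sum_filter_add_sum_filter_not s (fun p : Fin n × Fin n => p.2 = j0)
        (fun p => x ^ (p.1 : ℕ) * (-1 - x) ^ (p.2 : ℕ))
      have hsumeq : ∑ p ∈ s.filter (fun p => p.2 = j0), x ^ (p.1 : ℕ) * (-1 - x) ^ (p.2 : ℕ)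
          = (-1 - x) ^ (j0 : ℕ) * Phi n x := by
        rw [himg, Finset.sum_image (by intro a _ b _ hab; simpa [Prod.ext_iff] using hab)]
        simp only
        rw [← Finset.sum_mul, Phi, ← Fin.sum_univ_eq_sum_range (fun i => x ^ i) n]
        ring
      have hRsum : (∑ j : Fin n, ((if j = j0 then 1 else 0 : ℕ) : ℂ) * (-1 - x) ^ (j : ℕ))
          = (-1 - x) ^ (j0 : ℕ) := by
        have : ∀ j : Fin n, ((if j = j0 then 1 else 0 : ℕ) : ℂ) * (-1 - x) ^ (j : ℕ)
            = if j = j0 then (-1 - x) ^ (j : ℕ) else 0 := by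
          intro j; by_cases h : j = j0 <;> simp [h]
        rw [Finset.sum_congr rfl (fun j _ => this j)]
        rw [Finset.sum_ite_eq' Finset.univ j0 (fun j => (-1 - x) ^ (j : ℕ))]
        simp
      rw [ht]

      simp only [phi]
      rw [hRsum]
      simp only [Pi.zero_apply, Nat.cast_zero, zero_mul, Finset.sum_const_zero]
      simp only [ne_eq]
      rw [← hsplit, hsumeq]
      ring

lemma counting {n : ℕ} {s t : Finset (Fin n × Fin n)}
    (h : Relation.ReflTransGen (StoneMove n) s t) :
    ∃ (M : ℕ) (R C : Fin n → ℕ),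
      ((t.card : ℤ) = (s.card : ℤ) + 3 * M - n * ((∑ j, (R j : ℤ)) + ∑ i, (C i : ℤ))) ∧
      ∀ x : ℂ, phi n x t = phi n x s
        - (∑ j : Fin n, (R j : ℂ) * (-1 - x) ^ (j : ℕ)) * Phi n x
        - (∑ i : Fin n, (C i : ℂ) * x ^ (i : ℕ)) * Phi n (-1 - x) := by
  induction h using Relation.ReflTransGen.head_induction_on with
  | refl =>
    refine ⟨0, 0, 0, by simp, fun x => by simp⟩
  | head hmv _ ih =>
    obtain ⟨M, R, C, hcard, hphi⟩ := ih
    obtain ⟨m, R₁, C₁, hcard₁, hphi₁⟩ := move_delta hmv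
    refine ⟨M + m, fun j => R j + R₁ j, fun i => C i + C₁ i, ?_, ?_⟩
    · push_cast
      rw [Finset.sum_add_distrib, Finset.sum_add_distrib]
      push_cast at hcard hcard₁
      linarith [hcard, hcard₁]
    · intro x
      have e1 : ∑ j : Fin n, ((R j + R₁ j : ℕ) : ℂ) * (-1 - x) ^ (j : ℕ)
          = (∑ j : Fin n, (R j : ℂ) * (-1 - x) ^ (j : ℕ))
            + ∑ j : Fin n, (R₁ j : ℂ) * (-1 - x) ^ (j : ℕ) := by
        rw [← Finset.sum_add_distrib]
        congr 1; ext j; push_cast; ring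
      have e2 : ∑ i : Fin n, ((C i + C₁ i : ℕ) : ℂ) * x ^ (i : ℕ)
          = (∑ i : Fin n, (C i : ℂ) * x ^ (i : ℕ))
            + ∑ i : Fin n, (C₁ i : ℂ) * x ^ (i : ℕ) := by
        rw [← Finset.sum_add_distrib]
        congr 1; ext i; push_cast; ring
      rw [e1, e2, hphi x, hphi₁ x]
      ring


/-- 2021 USAMO Problem 3: for `n ≥ 2`, a nonzero number of legal moves can take
the empty `n`-by-`n` board back to the empty board iff `3 ∣ n`. -/
theorem usamo2021_p3 (n : ℕ) (hn : 2 ≤ n) :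
    Relation.TransGen (StoneMove n) ∅ ∅ ↔ 3 ∣ n := by
  constructor
  · intro h
    by_contra h3
    obtain ⟨u, hmv, hrt⟩ := Relation.TransGen.head'_iff.1 h
    rcases hmv with ⟨i, j, hi, hj, _, _, _, hu⟩ | ⟨i, hcol, _⟩ | ⟨j, hrow, _⟩
    · rw [Finset.empty_union] at hu
      obtain ⟨M, R, C, hcard, hphi⟩ := counting hrt
      have hcard3 : (u.card : ℤ) = 3 := by
        rw [hu, Finset.card_insert_of_notMem (by simp [Prod.ext_iff, Fin.ext_iff] <;> omega),
          Finset.card_insert_of_notMem (by simp [Prod.ext_iff, Fin.ext_iff] <;> omega),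
          Finset.card_singleton]
        norm_num
      have hphiu : ∀ x : ℂ, phi n x u = 0 := by
        intro x
        rw [hu, phi]
        rw [Finset.sum_insert (by simp [Prod.ext_iff, Fin.ext_iff] <;> omega),
          Finset.sum_insert (by simp [Prod.ext_iff, Fin.ext_iff] <;> omega),
          Finset.sum_singleton]
        simp only [Fin.val_mk]
        rw [pow_succ, pow_succ]
        ring
      have H : ∀ x : ℂ, (∑ j : Fin n, (R j : ℂ) * (-1 - x) ^ (j : ℕ)) * Phi n x
          + (∑ i : Fin n, (C i : ℂ) * x ^ (i : ℕ)) * Phi n (-1 - x) = 0 := by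
        intro x
        have := hphi x
        rw [hphiu x] at this
        have hempty : phi n x (∅ : Finset (Fin n × Fin n)) = 0 := by simp [phi]
        rw [hempty] at this
        linear_combination this
      obtain ⟨hR0, hC0⟩ := algebra_step hn h3 R C H
      have hRs : (∑ j : Fin n, (R j : ℤ)) = 0 :=
        Finset.sum_eq_zero (fun j _ => by simp [hR0 j])
      have hCs : (∑ i : Fin n, (C i : ℤ)) = 0 :=
        Finset.sum_eq_zero (fun i _ => by simp [hC0 i])
      rw [hRs, hCs, hcard3] at hcard
      simp at hcard
      omega
    · exact absurd (hcol ⟨0, by omega⟩) (Finset.notMem_empty _)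
    · exact absurd (hrow ⟨0, by omega⟩) (Finset.notMem_empty _)
  · intro h3
    obtain ⟨k, hk⟩ := h3
    have hkpos : 0 < k := by omega
    have : Relation.TransGen (StoneMove n) (L hk ∅) (L hk ∅) :=
      Relation.TransGen.lift' (L (k := k) hk) (fun s t hmv => sim hkpos hk s t hmv) _ _ cycle3
    rwa [L_empty] at this
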